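/- Suppose F̃ = F ∘ ψ̃ and p̃ = p ∘ ψ̃ for C¹ functions F, p : ℝ → ℝ (so the current function and the pressure are flux functions), and let p(x) = p̃(R(x), Z(x)). Then at any point x ∈ Ω where ∇ψ(x) ≠ 0, the ideal-MHD force balance μ₀ ∇p = (∇ × B) × B holds at x if and only if the Grad–Shafranov equation Δ*ψ̃ = −μ₀ R² p'(ψ̃) − F(ψ̃) F'(ψ̃) holds at (R(x), Z(x)), where Δ*ψ̃ := ∂²_R ψ̃ − (1/R) ∂_R ψ̃ + ∂²_Z ψ̃ = R² ∇·(∇ψ/R²) is the Grad–Shafranov operator. -/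

import Mathlib

/-- The cylindrical radius `R(x) = √(x₁² + x₂²)`. -/
noncomputable def Rcoord (x : EuclideanSpace ℝ (Fin 3)) : ℝ :=
  Real.sqrt ((x 0) ^ 2 + (x 1) ^ 2)

/-- Euclidean three-space minus the symmetry axis `{x₁ = x₂ = 0}`. -/
def offAxis : Set (EuclideanSpace ℝ (Fin 3)) := {x | ¬(x 0 = 0 ∧ x 1 = 0)}

/-- The gradient of the azimuthal angle, `∇φ(x) = (−x₂/R², x₁/R², 0)`. -/
noncomputable def gradPhi (x : EuclideanSpace ℝ (Fin 3)) : EuclideanSpace ℝ (Fin 3) :=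
  (WithLp.equiv 2 (Fin 3 → ℝ)).symm
    ![-(x 1) / ((x 0) ^ 2 + (x 1) ^ 2), (x 0) / ((x 0) ^ 2 + (x 1) ^ 2), 0]

/-- The cross product on Euclidean three-space. -/
noncomputable def cross3 (v w : EuclideanSpace ℝ (Fin 3)) : EuclideanSpace ℝ (Fin 3) :=
  (WithLp.equiv 2 (Fin 3 → ℝ)).symm
    ![v 1 * w 2 - v 2 * w 1, v 2 * w 0 - v 0 * w 2, v 0 * w 1 - v 1 * w 0]

/-- The curl `∇ × B` of a vector field on Euclidean three-space. -/
noncomputable def curl3 (B : EuclideanSpace ℝ (Fin 3) → EuclideanSpace ℝ (Fin 3))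
    (x : EuclideanSpace ℝ (Fin 3)) : EuclideanSpace ℝ (Fin 3) :=
  (WithLp.equiv 2 (Fin 3 → ℝ)).symm
    ![fderiv ℝ (fun y => B y 2) x (EuclideanSpace.single 1 1) -
        fderiv ℝ (fun y => B y 1) x (EuclideanSpace.single 2 1),
      fderiv ℝ (fun y => B y 0) x (EuclideanSpace.single 2 1) -
        fderiv ℝ (fun y => B y 2) x (EuclideanSpace.single 0 1),
      fderiv ℝ (fun y => B y 1) x (EuclideanSpace.single 0 1) -
        fderiv ℝ (fun y => B y 0) x (EuclideanSpace.single 1 1)]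

/-- The Grad–Shafranov operator
`Δ*ψ̃ = ∂²_R ψ̃ − (1/R) ∂_R ψ̃ + ∂²_Z ψ̃` acting on `ψ̃ : ℝ × ℝ → ℝ`. -/
noncomputable def gradShafranovOp (ψt : ℝ × ℝ → ℝ) (q : ℝ × ℝ) : ℝ :=
  fderiv ℝ (fun w => fderiv ℝ ψt w (1, 0)) q (1, 0) -
    (1 / q.1) * fderiv ℝ ψt q (1, 0) +
    fderiv ℝ (fun w => fderiv ℝ ψt w (0, 1)) q (0, 1)


section ForceBalanceAux

local notation "E3" => EuclideanSpace ℝ (Fin 3)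

private lemma rho_pos {x : E3} (hx : x ∈ offAxis) : 0 < (x 0) ^ 2 + (x 1) ^ 2 := by
  rcases not_and_or.mp hx with h | h
  · have := sq_nonneg (x 1); have := pow_pos (abs_pos.mpr h) 2
    nlinarith [sq_abs (x 0)]
  · have := sq_nonneg (x 0); have := pow_pos (abs_pos.mpr h) 2
    nlinarith [sq_abs (x 1)]

private lemma Rcoord_pos {x : E3} (hx : x ∈ offAxis) : 0 < Rcoord x :=
  Real.sqrt_pos.mpr (rho_pos hx)

private lemma Rcoord_sq {x : E3} (hx : x ∈ offAxis) : Rcoord x ^ 2 = (x 0) ^ 2 + (x 1) ^ 2 :=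
  Real.sq_sqrt (rho_pos hx).le

private lemma isOpen_offAxis : IsOpen offAxis := by
  have : offAxis = ((fun x : E3 => x 0) ⁻¹' {0}ᶜ) ∪ ((fun x : E3 => x 1) ⁻¹' {0}ᶜ) := by
    ext x; simp [offAxis, not_and_or]; tauto
  rw [this]
  have h0 : Continuous (fun x : E3 => x 0) := (EuclideanSpace.proj (𝕜 := ℝ) (0 : Fin 3)).continuous
  have h1 : Continuous (fun x : E3 => x 1) := (EuclideanSpace.proj (𝕜 := ℝ) (1 : Fin 3)).continuous
  exact ((isOpen_compl_singleton.preimage h0).union (isOpen_compl_singleton.preimage h1))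

private theorem gradient_apply' (f : E3 → ℝ) (x : E3) (i : Fin 3) :
    gradient f x i = fderiv ℝ f x (EuclideanSpace.single i 1) := by
  have h : (inner ℝ (gradient f x) (EuclideanSpace.single i (1:ℝ)) : ℝ)
      = fderiv ℝ f x (EuclideanSpace.single i 1) := by
    rw [gradient, InnerProductSpace.toDual_symm_apply]
  rw [EuclideanSpace.inner_single_right] at h
  simpa using h

private lemma E3_ext (v w : E3) (h : ∀ i, v i = w i) : v = w := by
  apply (WithLp.equiv 2 (Fin 3 → ℝ)).injective
  funext i
  exact h i

noncomputable def LRm (x : E3) : E3 →L[ℝ] ℝ :=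
  (x 0 / Rcoord x) • EuclideanSpace.proj 0 + (x 1 / Rcoord x) • EuclideanSpace.proj 1

noncomputable def LHm (x : E3) : E3 →L[ℝ] ℝ × ℝ :=
  (LRm x).prod (EuclideanSpace.proj 2)

private lemma hasFDerivAt_rho (x : E3) :
    HasFDerivAt (fun z : E3 => z 0 ^ 2 + z 1 ^ 2)
      ((2 * x 0) • (EuclideanSpace.proj 0 : E3 →L[ℝ] ℝ)
        + (2 * x 1) • (EuclideanSpace.proj 1 : E3 →L[ℝ] ℝ)) x := by
  have h : HasFDerivAt (fun z : E3 => z 0 * z 0 + z 1 * z 1)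
      (((x 0) • (EuclideanSpace.proj 0 : E3 →L[ℝ] ℝ) + (x 0) • (EuclideanSpace.proj 0 : E3 →L[ℝ] ℝ))
        + ((x 1) • (EuclideanSpace.proj 1 : E3 →L[ℝ] ℝ) + (x 1) • (EuclideanSpace.proj 1 : E3 →L[ℝ] ℝ))) x :=
    ((((EuclideanSpace.proj (0:Fin 3) : E3 →L[ℝ] ℝ).hasFDerivAt (x := x)).mul
      ((EuclideanSpace.proj (0:Fin 3) : E3 →L[ℝ] ℝ).hasFDerivAt (x := x))).add
    (((EuclideanSpace.proj (1:Fin 3) : E3 →L[ℝ] ℝ).hasFDerivAt (x := x)).mul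
      ((EuclideanSpace.proj (1:Fin 3) : E3 →L[ℝ] ℝ).hasFDerivAt (x := x))))
  have hfun : (fun z : E3 => z 0 ^ 2 + z 1 ^ 2) = (fun z : E3 => z 0 * z 0 + z 1 * z 1) := by
    funext z; ring
  rw [hfun]
  convert h using 1
  ext v; simp; ring

private lemma hasFDerivAt_Rcoord {x : E3} (hx : x ∈ offAxis) : HasFDerivAt Rcoord (LRm x) x := by
  have hs := (Real.hasDerivAt_sqrt (rho_pos hx).ne').comp_hasFDerivAt x (hasFDerivAt_rho x)
  have : (1 / (2 * Real.sqrt ((x 0) ^ 2 + (x 1) ^ 2))) •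
      ((2 * x 0) • (EuclideanSpace.proj 0 : E3 →L[ℝ] ℝ)
        + (2 * x 1) • (EuclideanSpace.proj 1 : E3 →L[ℝ] ℝ)) = LRm x := by
    ext v
    simp [LRm, Rcoord, ContinuousLinearMap.smul_apply, ContinuousLinearMap.add_apply]
    have hr : Real.sqrt ((x 0) ^ 2 + (x 1) ^ 2) ≠ 0 := (Rcoord_pos hx).ne'
    field_simp
  rw [← this]
  exact hs

private lemma hasFDerivAt_compH (g : ℝ × ℝ → ℝ) {x : E3} (hx : x ∈ offAxis)
    (hg : DifferentiableAt ℝ g (Rcoord x, x 2)) :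
    HasFDerivAt (fun z : E3 => g (Rcoord z, z 2))
      ((fderiv ℝ g (Rcoord x, x 2)).comp (LHm x)) x :=
  hg.hasFDerivAt.comp x ((hasFDerivAt_Rcoord hx).prodMk
    ((EuclideanSpace.proj (2:Fin 3) : E3 →L[ℝ] ℝ).hasFDerivAt))

private lemma LHm_apply0 (x : E3) : LHm x (EuclideanSpace.single 0 1) = (x 0 / Rcoord x, 0) := by
  simp [LHm, LRm, ContinuousLinearMap.prod_apply, EuclideanSpace.single_apply]

private lemma LHm_apply1 (x : E3) : LHm x (EuclideanSpace.single 1 1) = (x 1 / Rcoord x, 0) := by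
  simp [LHm, LRm, ContinuousLinearMap.prod_apply, EuclideanSpace.single_apply]

private lemma LHm_apply2 (x : E3) : LHm x (EuclideanSpace.single 2 1) = (0, 1) := by
  simp [LHm, LRm, ContinuousLinearMap.prod_apply, EuclideanSpace.single_apply]

private lemma eval_comp0 (x : E3) (L : ℝ × ℝ →L[ℝ] ℝ) :
    (L.comp (LHm x)) (EuclideanSpace.single 0 1) = (x 0 / Rcoord x) * L (1, 0) := by
  rw [ContinuousLinearMap.comp_apply, LHm_apply0]
  have h : ((x 0 / Rcoord x, (0:ℝ)) : ℝ × ℝ) = (x 0 / Rcoord x) • ((1:ℝ), (0:ℝ)) := by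
    simp [Prod.ext_iff]
  rw [h, map_smul, smul_eq_mul]

private lemma eval_comp1 (x : E3) (L : ℝ × ℝ →L[ℝ] ℝ) :
    (L.comp (LHm x)) (EuclideanSpace.single 1 1) = (x 1 / Rcoord x) * L (1, 0) := by
  rw [ContinuousLinearMap.comp_apply, LHm_apply1]
  have h : ((x 1 / Rcoord x, (0:ℝ)) : ℝ × ℝ) = (x 1 / Rcoord x) • ((1:ℝ), (0:ℝ)) := by
    simp [Prod.ext_iff]
  rw [h, map_smul, smul_eq_mul]

private lemma eval_comp2 (x : E3) (L : ℝ × ℝ →L[ℝ] ℝ) :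
    (L.comp (LHm x)) (EuclideanSpace.single 2 1) = L (0, 1) := by
  rw [ContinuousLinearMap.comp_apply, LHm_apply2]

private lemma LRm_apply0 (x : E3) : LRm x (EuclideanSpace.single 0 1) = x 0 / Rcoord x := by
  simp [LRm, EuclideanSpace.single_apply]

private lemma LRm_apply1 (x : E3) : LRm x (EuclideanSpace.single 1 1) = x 1 / Rcoord x := by
  simp [LRm, EuclideanSpace.single_apply]

private lemma LRm_apply2 (x : E3) : LRm x (EuclideanSpace.single 2 1) = 0 := by
  simp [LRm, EuclideanSpace.single_apply]

end ForceBalanceAux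

set_option maxHeartbeats 4000000 in
/-- **Force balance is equivalent to the Grad–Shafranov equation.**
If the current function and the pressure are flux functions, `F̃ = F ∘ ψ̃` and
`p̃ = p ∘ ψ̃`, then at any point `x ∈ Ω` with `∇ψ(x) ≠ 0` the ideal-MHD force
balance `μ₀ ∇p = (∇ × B) × B` holds at `x` iff the Grad–Shafranov equation
`Δ*ψ̃ = −μ₀ R² p'(ψ̃) − F(ψ̃) F'(ψ̃)` holds at `(R(x), Z(x))`. -/
theorem force_balance_iff_grad_shafranov
    (μ₀ : ℝ) (hμ₀ : 0 < μ₀)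
    (ψt Ft pt : ℝ × ℝ → ℝ)
    (hψt : ContDiffOn ℝ 3 ψt (Set.Ioi (0 : ℝ) ×ˢ Set.univ))
    (hFt : ContDiffOn ℝ 2 Ft (Set.Ioi (0 : ℝ) ×ˢ Set.univ))
    (F p : ℝ → ℝ) (hF1 : ContDiff ℝ 1 F) (hp1 : ContDiff ℝ 1 p)
    (hFflux : Ft = fun w => F (ψt w))
    (hpflux : pt = fun w => p (ψt w))
    (ψ Ffun pfun : EuclideanSpace ℝ (Fin 3) → ℝ)
    (hψ : ψ = fun x => ψt (Rcoord x, x 2))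
    (hFfun : Ffun = fun x => Ft (Rcoord x, x 2))
    (hpfun : pfun = fun x => pt (Rcoord x, x 2))
    (B : EuclideanSpace ℝ (Fin 3) → EuclideanSpace ℝ (Fin 3))
    (hB : B = fun x => cross3 (gradPhi x) (gradient ψ x) + Ffun x • gradPhi x) :
    ∀ x ∈ offAxis, gradient ψ x ≠ 0 →
      (μ₀ • gradient pfun x = cross3 (curl3 B x) (B x) ↔
        gradShafranovOp ψt (Rcoord x, x 2) =
          -μ₀ * (Rcoord x) ^ 2 * deriv p (ψt (Rcoord x, x 2)) -
            F (ψt (Rcoord x, x 2)) * deriv F (ψt (Rcoord x, x 2))) := by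
  intro x hx hgrad
  have hρ0 : ((x 0) ^ 2 + (x 1) ^ 2) ≠ 0 := (rho_pos hx).ne'
  have hr0 : Rcoord x ≠ 0 := (Rcoord_pos hx).ne'
  have hsq : Rcoord x ^ 2 = (x 0) ^ 2 + (x 1) ^ 2 := Rcoord_sq hx
  have hopen : IsOpen (Set.Ioi (0:ℝ) ×ˢ (Set.univ : Set ℝ)) := isOpen_Ioi.prod isOpen_univ
  have hmem : ∀ z : EuclideanSpace ℝ (Fin 3), z ∈ offAxis →
      (Rcoord z, z 2) ∈ Set.Ioi (0:ℝ) ×ˢ (Set.univ : Set ℝ) := fun z hz =>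
    ⟨Rcoord_pos hz, Set.mem_univ _⟩
  have hψz : ∀ z : EuclideanSpace ℝ (Fin 3), z ∈ offAxis →
      DifferentiableAt ℝ ψt (Rcoord z, z 2) := fun z hz =>
    (hψt.contDiffAt (hopen.mem_nhds (hmem z hz))).differentiableAt (by norm_num)
  -- gradient of ψ
  have hg0 : ∀ z ∈ offAxis, gradient ψ z 0
      = x 0 / Rcoord x * fderiv ℝ ψt (Rcoord x, x 2) (1, 0) → True := fun _ _ _ => trivial
  clear hg0
  have hgrad0 : ∀ z : EuclideanSpace ℝ (Fin 3), z ∈ offAxis → gradient ψ z 0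
      = z 0 / Rcoord z * fderiv ℝ ψt (Rcoord z, z 2) (1, 0) := by
    intro z hz
    rw [hψ, gradient_apply', (hasFDerivAt_compH ψt hz (hψz z hz)).fderiv, eval_comp0]
  have hgrad1 : ∀ z : EuclideanSpace ℝ (Fin 3), z ∈ offAxis → gradient ψ z 1
      = z 1 / Rcoord z * fderiv ℝ ψt (Rcoord z, z 2) (1, 0) := by
    intro z hz
    rw [hψ, gradient_apply', (hasFDerivAt_compH ψt hz (hψz z hz)).fderiv, eval_comp1]
  have hgrad2 : ∀ z : EuclideanSpace ℝ (Fin 3), z ∈ offAxis → gradient ψ z 2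
      = fderiv ℝ ψt (Rcoord z, z 2) (0, 1) := by
    intro z hz
    rw [hψ, gradient_apply', (hasFDerivAt_compH ψt hz (hψz z hz)).fderiv, eval_comp2]
  -- B components
  have hB0 : ∀ z : EuclideanSpace ℝ (Fin 3), z ∈ offAxis → B z 0
      = (z 0 * fderiv ℝ ψt (Rcoord z, z 2) (0, 1) - z 1 * F (ψt (Rcoord z, z 2)))
          * (((z 0) ^ 2 + (z 1) ^ 2))⁻¹ := by
    intro z hz
    rw [hB]
    simp only [PiLp.add_apply, PiLp.smul_apply, smul_eq_mul, cross3, gradPhi,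
      WithLp.equiv_symm_apply, PiLp.toLp_apply, Matrix.cons_val_zero, Matrix.cons_val_one, Matrix.head_cons,
      Matrix.cons_val_two, Matrix.tail_cons, hFfun, hFflux]
    rw [hgrad1 z hz, hgrad2 z hz]
    field_simp
    ring
  have hB1 : ∀ z : EuclideanSpace ℝ (Fin 3), z ∈ offAxis → B z 1
      = (z 1 * fderiv ℝ ψt (Rcoord z, z 2) (0, 1) + z 0 * F (ψt (Rcoord z, z 2)))
          * (((z 0) ^ 2 + (z 1) ^ 2))⁻¹ := by
    intro z hz
    rw [hB]
    simp only [PiLp.add_apply, PiLp.smul_apply, smul_eq_mul, cross3, gradPhi,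
      WithLp.equiv_symm_apply, PiLp.toLp_apply, Matrix.cons_val_zero, Matrix.cons_val_one, Matrix.head_cons,
      Matrix.cons_val_two, Matrix.tail_cons, hFfun, hFflux]
    rw [hgrad0 z hz, hgrad2 z hz]
    field_simp
    ring
  have hB2 : ∀ z : EuclideanSpace ℝ (Fin 3), z ∈ offAxis → B z 2
      = -(fderiv ℝ ψt (Rcoord z, z 2) (1, 0)) * (Rcoord z)⁻¹ := by
    intro z hz
    have hsz : Rcoord z ^ 2 = (z 0) ^ 2 + (z 1) ^ 2 := Rcoord_sq hz
    have hrz : Rcoord z ≠ 0 := (Rcoord_pos hz).ne'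
    rw [hB]
    simp only [PiLp.add_apply, PiLp.smul_apply, smul_eq_mul, cross3, gradPhi,
      WithLp.equiv_symm_apply, PiLp.toLp_apply, Matrix.cons_val_zero, Matrix.cons_val_one, Matrix.head_cons,
      Matrix.cons_val_two, Matrix.tail_cons, hFfun, hFflux]
    rw [hgrad0 z hz, hgrad1 z hz, show (z 0) ^ 2 + (z 1) ^ 2 = Rcoord z ^ 2 from hsz.symm]
    field_simp
    linear_combination (fderiv ℝ ψt (Rcoord z, z 2)) (1, 0) * hsz

  -- differentiability building blocks at x
  have hq3 : ContDiffAt ℝ 3 ψt (Rcoord x, x 2) := hψt.contDiffAt (hopen.mem_nhds (hmem x hx))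
  have hfd2 : ContDiffAt ℝ 2 (fderiv ℝ ψt) (Rcoord x, x 2) := hq3.fderiv_right (by norm_num)
  have hgR : DifferentiableAt ℝ (fun w => fderiv ℝ ψt w (1, 0)) (Rcoord x, x 2) :=
    (hfd2.differentiableAt (by norm_num)).clm_apply (differentiableAt_const _)
  have hgZ : DifferentiableAt ℝ (fun w => fderiv ℝ ψt w (0, 1)) (Rcoord x, x 2) :=
    (hfd2.differentiableAt (by norm_num)).clm_apply (differentiableAt_const _)
  have hdru : HasFDerivAt (fun z : EuclideanSpace ℝ (Fin 3) => ψt (Rcoord z, z 2))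
      ((fderiv ℝ ψt (Rcoord x, x 2)).comp (LHm x)) x := hasFDerivAt_compH ψt hx (hψz x hx)
  have hdvR : HasFDerivAt (fun z : EuclideanSpace ℝ (Fin 3) => fderiv ℝ ψt (Rcoord z, z 2) (1, 0))
      ((fderiv ℝ (fun w => fderiv ℝ ψt w (1, 0)) (Rcoord x, x 2)).comp (LHm x)) x :=
    hasFDerivAt_compH (fun w => fderiv ℝ ψt w (1, 0)) hx hgR
  have hdvZ : HasFDerivAt (fun z : EuclideanSpace ℝ (Fin 3) => fderiv ℝ ψt (Rcoord z, z 2) (0, 1))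
      ((fderiv ℝ (fun w => fderiv ℝ ψt w (0, 1)) (Rcoord x, x 2)).comp (LHm x)) x :=
    hasFDerivAt_compH (fun w => fderiv ℝ ψt w (0, 1)) hx hgZ
  have hdF : HasFDerivAt (fun z : EuclideanSpace ℝ (Fin 3) => F (ψt (Rcoord z, z 2)))
      ((deriv F (ψt (Rcoord x, x 2))) • ((fderiv ℝ ψt (Rcoord x, x 2)).comp (LHm x))) x :=
    ((hF1.differentiable one_ne_zero) (ψt (Rcoord x, x 2))).hasDerivAt.comp_hasFDerivAt x hdru
  have hdp : HasFDerivAt (fun z : EuclideanSpace ℝ (Fin 3) => p (ψt (Rcoord z, z 2)))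
      ((deriv p (ψt (Rcoord x, x 2))) • ((fderiv ℝ ψt (Rcoord x, x 2)).comp (LHm x))) x :=
    ((hp1.differentiable one_ne_zero) (ψt (Rcoord x, x 2))).hasDerivAt.comp_hasFDerivAt x hdru
  have hc0 : HasFDerivAt (fun z : EuclideanSpace ℝ (Fin 3) => z 0)
      (EuclideanSpace.proj 0 : EuclideanSpace ℝ (Fin 3) →L[ℝ] ℝ) x :=
    (EuclideanSpace.proj (0 : Fin 3) : EuclideanSpace ℝ (Fin 3) →L[ℝ] ℝ).hasFDerivAt
  have hc1 : HasFDerivAt (fun z : EuclideanSpace ℝ (Fin 3) => z 1)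
      (EuclideanSpace.proj 1 : EuclideanSpace ℝ (Fin 3) →L[ℝ] ℝ) x :=
    (EuclideanSpace.proj (1 : Fin 3) : EuclideanSpace ℝ (Fin 3) →L[ℝ] ℝ).hasFDerivAt
  have hinv : HasFDerivAt (fun z : EuclideanSpace ℝ (Fin 3) => (((z 0) ^ 2 + (z 1) ^ 2))⁻¹)
      ((-((((x 0) ^ 2 + (x 1) ^ 2)) ^ 2)⁻¹) •
        ((2 * x 0) • (EuclideanSpace.proj 0 : EuclideanSpace ℝ (Fin 3) →L[ℝ] ℝ)
          + (2 * x 1) • (EuclideanSpace.proj 1 : EuclideanSpace ℝ (Fin 3) →L[ℝ] ℝ))) x :=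
    (hasDerivAt_inv hρ0).comp_hasFDerivAt x (hasFDerivAt_rho x)
  have hrinv : HasFDerivAt (fun z : EuclideanSpace ℝ (Fin 3) => (Rcoord z)⁻¹)
      ((-((Rcoord x) ^ 2)⁻¹) • LRm x) x :=
    (hasDerivAt_inv hr0).comp_hasFDerivAt x (hasFDerivAt_Rcoord hx)
  have hnx : offAxis ∈ nhds x := isOpen_offAxis.mem_nhds hx
  -- derivative of the three components of B at x
  have hBd0 : HasFDerivAt (fun z : EuclideanSpace ℝ (Fin 3) => B z 0) _ x :=
    HasFDerivAt.congr_of_eventuallyEq (((hc0.mul hdvZ).sub (hc1.mul hdF)).mul hinv)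
      (by filter_upwards [hnx] with z hz using hB0 z hz)
  have hBd1 : HasFDerivAt (fun z : EuclideanSpace ℝ (Fin 3) => B z 1) _ x :=
    HasFDerivAt.congr_of_eventuallyEq (((hc1.mul hdvZ).add (hc0.mul hdF)).mul hinv)
      (by filter_upwards [hnx] with z hz using hB1 z hz)
  have hBd2 : HasFDerivAt (fun z : EuclideanSpace ℝ (Fin 3) => B z 2) _ x :=
    HasFDerivAt.congr_of_eventuallyEq ((hdvR.neg).mul hrinv)
      (by filter_upwards [hnx] with z hz using hB2 z hz)
  -- the six partial derivatives
  have d01 : fderiv ℝ (fun z : EuclideanSpace ℝ (Fin 3) => B z 1) x (EuclideanSpace.single 0 1)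
      = (x 1 * ((x 0 / Rcoord x) * fderiv ℝ (fun w => fderiv ℝ ψt w (0, 1)) (Rcoord x, x 2) (1, 0)) + (F (ψt (Rcoord x, x 2)) + x 0 * (deriv F (ψt (Rcoord x, x 2)) * ((x 0 / Rcoord x) * fderiv ℝ ψt (Rcoord x, x 2) (1, 0))))) / Rcoord x ^ 2
        - (x 1 * fderiv ℝ ψt (Rcoord x, x 2) (0, 1) + x 0 * F (ψt (Rcoord x, x 2))) * (2 * x 0) / Rcoord x ^ 4 := by
    rw [hBd1.fderiv]
    simp only [ContinuousLinearMap.add_apply, ContinuousLinearMap.sub_apply,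
      ContinuousLinearMap.smul_apply, smul_eq_mul, eval_comp0, eval_comp1, eval_comp2,
      PiLp.proj_apply, EuclideanSpace.single_apply]
    norm_num [Fin.ext_iff]
    try rw [← hsq]
    try field_simp
    try ring
  have d10 : fderiv ℝ (fun z : EuclideanSpace ℝ (Fin 3) => B z 0) x (EuclideanSpace.single 1 1)
      = (x 0 * ((x 1 / Rcoord x) * fderiv ℝ (fun w => fderiv ℝ ψt w (0, 1)) (Rcoord x, x 2) (1, 0)) - (F (ψt (Rcoord x, x 2)) + x 1 * (deriv F (ψt (Rcoord x, x 2)) * ((x 1 / Rcoord x) * fderiv ℝ ψt (Rcoord x, x 2) (1, 0))))) / Rcoord x ^ 2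
        - (x 0 * fderiv ℝ ψt (Rcoord x, x 2) (0, 1) - x 1 * F (ψt (Rcoord x, x 2))) * (2 * x 1) / Rcoord x ^ 4 := by
    rw [hBd0.fderiv]
    simp only [ContinuousLinearMap.add_apply, ContinuousLinearMap.sub_apply,
      ContinuousLinearMap.smul_apply, smul_eq_mul, eval_comp0, eval_comp1, eval_comp2,
      PiLp.proj_apply, EuclideanSpace.single_apply]
    norm_num [Fin.ext_iff]
    try rw [← hsq]
    try field_simp
    try ring
  have d21 : fderiv ℝ (fun z : EuclideanSpace ℝ (Fin 3) => B z 1) x (EuclideanSpace.single 2 1)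
      = (x 1 * fderiv ℝ (fun w => fderiv ℝ ψt w (0, 1)) (Rcoord x, x 2) (0, 1) + x 0 * (deriv F (ψt (Rcoord x, x 2)) * fderiv ℝ ψt (Rcoord x, x 2) (0, 1))) / Rcoord x ^ 2 := by
    rw [hBd1.fderiv]
    simp only [ContinuousLinearMap.add_apply, ContinuousLinearMap.sub_apply,
      ContinuousLinearMap.smul_apply, smul_eq_mul, eval_comp0, eval_comp1, eval_comp2,
      PiLp.proj_apply, EuclideanSpace.single_apply]
    norm_num [Fin.ext_iff]
    try rw [← hsq]
    try field_simp
    try ring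
  have d20 : fderiv ℝ (fun z : EuclideanSpace ℝ (Fin 3) => B z 0) x (EuclideanSpace.single 2 1)
      = (x 0 * fderiv ℝ (fun w => fderiv ℝ ψt w (0, 1)) (Rcoord x, x 2) (0, 1) - x 1 * (deriv F (ψt (Rcoord x, x 2)) * fderiv ℝ ψt (Rcoord x, x 2) (0, 1))) / Rcoord x ^ 2 := by
    rw [hBd0.fderiv]
    simp only [ContinuousLinearMap.add_apply, ContinuousLinearMap.sub_apply,
      ContinuousLinearMap.smul_apply, smul_eq_mul, eval_comp0, eval_comp1, eval_comp2,
      PiLp.proj_apply, EuclideanSpace.single_apply]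
    norm_num [Fin.ext_iff]
    try rw [← hsq]
    try field_simp
    try ring
  have d12 : fderiv ℝ (fun z : EuclideanSpace ℝ (Fin 3) => B z 2) x (EuclideanSpace.single 1 1)
      = -((x 1 / Rcoord x) * fderiv ℝ (fun w => fderiv ℝ ψt w (1, 0)) (Rcoord x, x 2) (1, 0)) / Rcoord x + fderiv ℝ ψt (Rcoord x, x 2) (1, 0) * (x 1 / Rcoord x) / Rcoord x ^ 2 := by
    rw [hBd2.fderiv]
    simp only [ContinuousLinearMap.add_apply, ContinuousLinearMap.sub_apply,
      ContinuousLinearMap.neg_apply, ContinuousLinearMap.smul_apply, smul_eq_mul,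
      eval_comp0, eval_comp1, eval_comp2, LRm_apply0, LRm_apply1, LRm_apply2,
      PiLp.proj_apply, EuclideanSpace.single_apply]
    norm_num [Fin.ext_iff]
    try rw [← hsq]
    try field_simp
    try ring
  have d02 : fderiv ℝ (fun z : EuclideanSpace ℝ (Fin 3) => B z 2) x (EuclideanSpace.single 0 1)
      = -((x 0 / Rcoord x) * fderiv ℝ (fun w => fderiv ℝ ψt w (1, 0)) (Rcoord x, x 2) (1, 0)) / Rcoord x + fderiv ℝ ψt (Rcoord x, x 2) (1, 0) * (x 0 / Rcoord x) / Rcoord x ^ 2 := by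
    rw [hBd2.fderiv]
    simp only [ContinuousLinearMap.add_apply, ContinuousLinearMap.sub_apply,
      ContinuousLinearMap.neg_apply, ContinuousLinearMap.smul_apply, smul_eq_mul,
      eval_comp0, eval_comp1, eval_comp2, LRm_apply0, LRm_apply1, LRm_apply2,
      PiLp.proj_apply, EuclideanSpace.single_apply]
    norm_num [Fin.ext_iff]
    try rw [← hsq]
    try field_simp
    try ring

  -- curl components
  have hcurl0 : curl3 B x 0 = -(x 1 / Rcoord x ^ 2) * (fderiv ℝ (fun w => fderiv ℝ ψt w (1, 0)) (Rcoord x, x 2) (1, 0) - (1 / Rcoord x) * fderiv ℝ ψt (Rcoord x, x 2) (1, 0) + fderiv ℝ (fun w => fderiv ℝ ψt w (0, 1)) (Rcoord x, x 2) (0, 1)) - x 0 * deriv F (ψt (Rcoord x, x 2)) * fderiv ℝ ψt (Rcoord x, x 2) (0, 1) / Rcoord x ^ 2 := by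
    simp only [curl3, WithLp.equiv_symm_apply, PiLp.toLp_apply, Matrix.cons_val_zero]
    rw [d12, d21]
    field_simp
    ring
  have hcurl1 : curl3 B x 1 = (x 0 / Rcoord x ^ 2) * (fderiv ℝ (fun w => fderiv ℝ ψt w (1, 0)) (Rcoord x, x 2) (1, 0) - (1 / Rcoord x) * fderiv ℝ ψt (Rcoord x, x 2) (1, 0) + fderiv ℝ (fun w => fderiv ℝ ψt w (0, 1)) (Rcoord x, x 2) (0, 1)) - x 1 * deriv F (ψt (Rcoord x, x 2)) * fderiv ℝ ψt (Rcoord x, x 2) (0, 1) / Rcoord x ^ 2 := by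
    simp only [curl3, WithLp.equiv_symm_apply, PiLp.toLp_apply, Matrix.cons_val_one, Matrix.head_cons, Matrix.cons_val_zero]
    rw [d20, d02]
    field_simp
    ring
  have hcurl2 : curl3 B x 2 = deriv F (ψt (Rcoord x, x 2)) * fderiv ℝ ψt (Rcoord x, x 2) (1, 0) / Rcoord x := by
    simp only [curl3, WithLp.equiv_symm_apply, PiLp.toLp_apply]
    norm_num [Matrix.cons_val_zero, Matrix.cons_val_one, Matrix.head_cons, Matrix.cons_val_two, Matrix.tail_cons]
    rw [d01, d10]
    field_simp
    linear_combination (2 * F (ψt (Rcoord x, x 2)) - Rcoord x * deriv F (ψt (Rcoord x, x 2)) * fderiv ℝ ψt (Rcoord x, x 2) (1, 0)) * hsq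
  -- cross product components (cleared denominators)
  have hR0 : cross3 (curl3 B x) (B x) 0 * Rcoord x ^ 2
      = -((fderiv ℝ (fun w => fderiv ℝ ψt w (1, 0)) (Rcoord x, x 2) (1, 0) - (1 / Rcoord x) * fderiv ℝ ψt (Rcoord x, x 2) (1, 0) + fderiv ℝ (fun w => fderiv ℝ ψt w (0, 1)) (Rcoord x, x 2) (0, 1)) + F (ψt (Rcoord x, x 2)) * deriv F (ψt (Rcoord x, x 2))) * (x 0 / Rcoord x * fderiv ℝ ψt (Rcoord x, x 2) (1, 0)) := by
    simp only [cross3, WithLp.equiv_symm_apply, PiLp.toLp_apply, Matrix.cons_val_zero]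
    rw [hcurl1, hcurl2, hB2 x hx, hB1 x hx, ← hsq]
    field_simp
    ring
  have hR1 : cross3 (curl3 B x) (B x) 1 * Rcoord x ^ 2
      = -((fderiv ℝ (fun w => fderiv ℝ ψt w (1, 0)) (Rcoord x, x 2) (1, 0) - (1 / Rcoord x) * fderiv ℝ ψt (Rcoord x, x 2) (1, 0) + fderiv ℝ (fun w => fderiv ℝ ψt w (0, 1)) (Rcoord x, x 2) (0, 1)) + F (ψt (Rcoord x, x 2)) * deriv F (ψt (Rcoord x, x 2))) * (x 1 / Rcoord x * fderiv ℝ ψt (Rcoord x, x 2) (1, 0)) := by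
    simp only [cross3, WithLp.equiv_symm_apply, PiLp.toLp_apply, Matrix.cons_val_one, Matrix.head_cons, Matrix.cons_val_zero]
    rw [hcurl0, hcurl2, hB2 x hx, hB0 x hx, ← hsq]
    field_simp
    ring
  have hR2 : cross3 (curl3 B x) (B x) 2 * Rcoord x ^ 2
      = -((fderiv ℝ (fun w => fderiv ℝ ψt w (1, 0)) (Rcoord x, x 2) (1, 0) - (1 / Rcoord x) * fderiv ℝ ψt (Rcoord x, x 2) (1, 0) + fderiv ℝ (fun w => fderiv ℝ ψt w (0, 1)) (Rcoord x, x 2) (0, 1)) + F (ψt (Rcoord x, x 2)) * deriv F (ψt (Rcoord x, x 2))) * fderiv ℝ ψt (Rcoord x, x 2) (0, 1) := by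
    simp only [cross3, WithLp.equiv_symm_apply, PiLp.toLp_apply]
    norm_num [Matrix.cons_val_zero, Matrix.cons_val_one, Matrix.head_cons, Matrix.cons_val_two, Matrix.tail_cons]
    rw [hcurl0, hcurl1, hB0 x hx, hB1 x hx, ← hsq]
    field_simp
    linear_combination (Rcoord x * (fderiv ℝ (fun w => fderiv ℝ ψt w (1, 0)) (Rcoord x, x 2) (1, 0) + fderiv ℝ (fun w => fderiv ℝ ψt w (0, 1)) (Rcoord x, x 2) (0, 1) + deriv F (ψt (Rcoord x, x 2)) * F (ψt (Rcoord x, x 2))) * fderiv ℝ ψt (Rcoord x, x 2) (0, 1) - fderiv ℝ ψt (Rcoord x, x 2) (1, 0) * fderiv ℝ ψt (Rcoord x, x 2) (0, 1)) * hsq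
  -- LHS components
  have hpfun2 : pfun = fun z : EuclideanSpace ℝ (Fin 3) => p (ψt (Rcoord z, z 2)) := by
    funext z; rw [hpfun, hpflux]
  have hL0 : (μ₀ • gradient pfun x) 0 = μ₀ * (deriv p (ψt (Rcoord x, x 2)) * (x 0 / Rcoord x * fderiv ℝ ψt (Rcoord x, x 2) (1, 0))) := by
    rw [hpfun2, PiLp.smul_apply, smul_eq_mul, gradient_apply', hdp.fderiv]
    simp only [ContinuousLinearMap.smul_apply, smul_eq_mul, eval_comp0]
  have hL1 : (μ₀ • gradient pfun x) 1 = μ₀ * (deriv p (ψt (Rcoord x, x 2)) * (x 1 / Rcoord x * fderiv ℝ ψt (Rcoord x, x 2) (1, 0))) := by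
    rw [hpfun2, PiLp.smul_apply, smul_eq_mul, gradient_apply', hdp.fderiv]
    simp only [ContinuousLinearMap.smul_apply, smul_eq_mul, eval_comp1]
  have hL2 : (μ₀ • gradient pfun x) 2 = μ₀ * (deriv p (ψt (Rcoord x, x 2)) * fderiv ℝ ψt (Rcoord x, x 2) (0, 1)) := by
    rw [hpfun2, PiLp.smul_apply, smul_eq_mul, gradient_apply', hdp.fderiv]
    simp only [ContinuousLinearMap.smul_apply, smul_eq_mul, eval_comp2]
  -- the equivalence
  constructor
  · intro h
    have hc : ∀ i : Fin 3, (μ₀ • gradient pfun x) i = cross3 (curl3 B x) (B x) i :=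
      fun i => congrArg (fun v : EuclideanSpace ℝ (Fin 3) => v i) h
    have E0 : μ₀ * (deriv p (ψt (Rcoord x, x 2)) * (x 0 / Rcoord x * fderiv ℝ ψt (Rcoord x, x 2) (1, 0))) * Rcoord x ^ 2
        = -((fderiv ℝ (fun w => fderiv ℝ ψt w (1, 0)) (Rcoord x, x 2) (1, 0) - (1 / Rcoord x) * fderiv ℝ ψt (Rcoord x, x 2) (1, 0) + fderiv ℝ (fun w => fderiv ℝ ψt w (0, 1)) (Rcoord x, x 2) (0, 1)) + F (ψt (Rcoord x, x 2)) * deriv F (ψt (Rcoord x, x 2))) * (x 0 / Rcoord x * fderiv ℝ ψt (Rcoord x, x 2) (1, 0)) := by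
      rw [← hL0, hc 0, hR0]
    have E1 : μ₀ * (deriv p (ψt (Rcoord x, x 2)) * (x 1 / Rcoord x * fderiv ℝ ψt (Rcoord x, x 2) (1, 0))) * Rcoord x ^ 2
        = -((fderiv ℝ (fun w => fderiv ℝ ψt w (1, 0)) (Rcoord x, x 2) (1, 0) - (1 / Rcoord x) * fderiv ℝ ψt (Rcoord x, x 2) (1, 0) + fderiv ℝ (fun w => fderiv ℝ ψt w (0, 1)) (Rcoord x, x 2) (0, 1)) + F (ψt (Rcoord x, x 2)) * deriv F (ψt (Rcoord x, x 2))) * (x 1 / Rcoord x * fderiv ℝ ψt (Rcoord x, x 2) (1, 0)) := by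
      rw [← hL1, hc 1, hR1]
    have E2 : μ₀ * (deriv p (ψt (Rcoord x, x 2)) * fderiv ℝ ψt (Rcoord x, x 2) (0, 1)) * Rcoord x ^ 2
        = -((fderiv ℝ (fun w => fderiv ℝ ψt w (1, 0)) (Rcoord x, x 2) (1, 0) - (1 / Rcoord x) * fderiv ℝ ψt (Rcoord x, x 2) (1, 0) + fderiv ℝ (fun w => fderiv ℝ ψt w (0, 1)) (Rcoord x, x 2) (0, 1)) + F (ψt (Rcoord x, x 2)) * deriv F (ψt (Rcoord x, x 2))) * fderiv ℝ ψt (Rcoord x, x 2) (0, 1) := by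
      rw [← hL2, hc 2, hR2]
    obtain ⟨i, hi⟩ : ∃ i : Fin 3, gradient ψ x i ≠ 0 := by
      by_contra hcon
      push_neg at hcon
      exact hgrad (E3_ext _ _ fun i => by rw [hcon i]; simp)
    have key : μ₀ * deriv p (ψt (Rcoord x, x 2)) * Rcoord x ^ 2 = -((fderiv ℝ (fun w => fderiv ℝ ψt w (1, 0)) (Rcoord x, x 2) (1, 0) - (1 / Rcoord x) * fderiv ℝ ψt (Rcoord x, x 2) (1, 0) + fderiv ℝ (fun w => fderiv ℝ ψt w (0, 1)) (Rcoord x, x 2) (0, 1)) + F (ψt (Rcoord x, x 2)) * deriv F (ψt (Rcoord x, x 2))) := by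
      have htri : i = 0 ∨ i = 1 ∨ i = 2 := by fin_cases i <;> decide
      rcases htri with rfl | rfl | rfl
      · rw [hgrad0 x hx] at hi
        have h' : (μ₀ * deriv p (ψt (Rcoord x, x 2)) * Rcoord x ^ 2 - (-((fderiv ℝ (fun w => fderiv ℝ ψt w (1, 0)) (Rcoord x, x 2) (1, 0) - (1 / Rcoord x) * fderiv ℝ ψt (Rcoord x, x 2) (1, 0) + fderiv ℝ (fun w => fderiv ℝ ψt w (0, 1)) (Rcoord x, x 2) (0, 1)) + F (ψt (Rcoord x, x 2)) * deriv F (ψt (Rcoord x, x 2)))))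
            * (x 0 / Rcoord x * fderiv ℝ ψt (Rcoord x, x 2) (1, 0)) = 0 := by linear_combination E0
        rcases mul_eq_zero.mp h' with h'' | h''
        · linarith [h'']
        · exact absurd h'' hi
      · rw [hgrad1 x hx] at hi
        have h' : (μ₀ * deriv p (ψt (Rcoord x, x 2)) * Rcoord x ^ 2 - (-((fderiv ℝ (fun w => fderiv ℝ ψt w (1, 0)) (Rcoord x, x 2) (1, 0) - (1 / Rcoord x) * fderiv ℝ ψt (Rcoord x, x 2) (1, 0) + fderiv ℝ (fun w => fderiv ℝ ψt w (0, 1)) (Rcoord x, x 2) (0, 1)) + F (ψt (Rcoord x, x 2)) * deriv F (ψt (Rcoord x, x 2)))))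
            * (x 1 / Rcoord x * fderiv ℝ ψt (Rcoord x, x 2) (1, 0)) = 0 := by linear_combination E1
        rcases mul_eq_zero.mp h' with h'' | h''
        · linarith [h'']
        · exact absurd h'' hi
      · rw [hgrad2 x hx] at hi
        have h' : (μ₀ * deriv p (ψt (Rcoord x, x 2)) * Rcoord x ^ 2 - (-((fderiv ℝ (fun w => fderiv ℝ ψt w (1, 0)) (Rcoord x, x 2) (1, 0) - (1 / Rcoord x) * fderiv ℝ ψt (Rcoord x, x 2) (1, 0) + fderiv ℝ (fun w => fderiv ℝ ψt w (0, 1)) (Rcoord x, x 2) (0, 1)) + F (ψt (Rcoord x, x 2)) * deriv F (ψt (Rcoord x, x 2)))))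
            * fderiv ℝ ψt (Rcoord x, x 2) (0, 1) = 0 := by linear_combination E2
        rcases mul_eq_zero.mp h' with h'' | h''
        · linarith [h'']
        · exact absurd h'' hi
    have hGSval : gradShafranovOp ψt (Rcoord x, x 2)
        = fderiv ℝ (fun w => fderiv ℝ ψt w (1, 0)) (Rcoord x, x 2) (1, 0) - (1 / Rcoord x) * fderiv ℝ ψt (Rcoord x, x 2) (1, 0) + fderiv ℝ (fun w => fderiv ℝ ψt w (0, 1)) (Rcoord x, x 2) (0, 1) := rfl
    rw [hGSval]
    linear_combination key
  · intro hGS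
    have hGS2 : fderiv ℝ (fun w => fderiv ℝ ψt w (1, 0)) (Rcoord x, x 2) (1, 0) - (1 / Rcoord x) * fderiv ℝ ψt (Rcoord x, x 2) (1, 0) + fderiv ℝ (fun w => fderiv ℝ ψt w (0, 1)) (Rcoord x, x 2) (0, 1)
        = -μ₀ * Rcoord x ^ 2 * deriv p (ψt (Rcoord x, x 2)) - F (ψt (Rcoord x, x 2)) * deriv F (ψt (Rcoord x, x 2)) := hGS
    have key : μ₀ * deriv p (ψt (Rcoord x, x 2)) * Rcoord x ^ 2 = -((fderiv ℝ (fun w => fderiv ℝ ψt w (1, 0)) (Rcoord x, x 2) (1, 0) - (1 / Rcoord x) * fderiv ℝ ψt (Rcoord x, x 2) (1, 0) + fderiv ℝ (fun w => fderiv ℝ ψt w (0, 1)) (Rcoord x, x 2) (0, 1)) + F (ψt (Rcoord x, x 2)) * deriv F (ψt (Rcoord x, x 2))) := by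
      linear_combination hGS2
    apply E3_ext
    intro i
    have htri : i = 0 ∨ i = 1 ∨ i = 2 := by fin_cases i <;> decide
    rcases htri with rfl | rfl | rfl
    · rw [hL0]
      have h2 : cross3 (curl3 B x) (B x) 0 * Rcoord x ^ 2
          = μ₀ * (deriv p (ψt (Rcoord x, x 2)) * (x 0 / Rcoord x * fderiv ℝ ψt (Rcoord x, x 2) (1, 0))) * Rcoord x ^ 2 := by
        rw [hR0]
        linear_combination -((x 0 / Rcoord x * fderiv ℝ ψt (Rcoord x, x 2) (1, 0))) * key
      exact (mul_right_cancel₀ (pow_ne_zero 2 hr0) h2).symm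
    · rw [hL1]
      have h2 : cross3 (curl3 B x) (B x) 1 * Rcoord x ^ 2
          = μ₀ * (deriv p (ψt (Rcoord x, x 2)) * (x 1 / Rcoord x * fderiv ℝ ψt (Rcoord x, x 2) (1, 0))) * Rcoord x ^ 2 := by
        rw [hR1]
        linear_combination -((x 1 / Rcoord x * fderiv ℝ ψt (Rcoord x, x 2) (1, 0))) * key
      exact (mul_right_cancel₀ (pow_ne_zero 2 hr0) h2).symm
    · rw [hL2]
      have h2 : cross3 (curl3 B x) (B x) 2 * Rcoord x ^ 2
          = μ₀ * (deriv p (ψt (Rcoord x, x 2)) * fderiv ℝ ψt (Rcoord x, x 2) (0, 1)) * Rcoord x ^ 2 := by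
        rw [hR2]
        linear_combination -(fderiv ℝ ψt (Rcoord x, x 2) (0, 1)) * key
      exact (mul_right_cancel₀ (pow_ne_zero 2 hr0) h2).symm
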